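/- Let p and q be primes and M = ℕ∖{1} the numerical monoid generated by 2 and 3, with 𝔽_p[X;M] viewed as the subring of 𝔽_p[X] of polynomials with no degree-1 term. Then X^q − 1 factors nontrivially (as a product of two nonunits) in 𝔽_p[X;M] if and only if X^q − 1 factors in 𝔽_p[X] as a product of two traceless polynomials. -/

import Mathlib

open Polynomial

/-- The subring `𝔽_p[X;M]` of `𝔽_p[X]` (for `M = ⟨2,3⟩`), consisting of
polynomials whose coefficient on `X^1` vanishes. -/
def MRing (p : ℕ) : Subring (Polynomial (ZMod p)) where
  carrier := {f | f.coeff 1 = 0}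
  zero_mem' := by simp
  one_mem' := by simp [Polynomial.coeff_one]
  add_mem' := by
    intro a b ha hb
    simp only [Set.mem_setOf_eq, Polynomial.coeff_add] at *
    simp [ha, hb]
  neg_mem' := by
    intro a ha
    simp only [Set.mem_setOf_eq, Polynomial.coeff_neg] at *
    simp [ha]
  mul_mem' := by
    intro a b ha hb
    simp only [Set.mem_setOf_eq] at *
    rw [Polynomial.coeff_mul, Finset.Nat.sum_antidiagonal_eq_sum_range_succ_mk]
    simp [Finset.sum_range_succ, ha, hb]

/-- A polynomial of degree `m ≥ 1` is traceless if its coefficient on `X^{m-1}` is zero. -/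
def Traceless {p : ℕ} (f : Polynomial (ZMod p)) : Prop :=
  1 ≤ f.natDegree ∧ f.coeff (f.natDegree - 1) = 0

lemma rev_XqSub (p : ℕ) (hp : p.Prime) (q : ℕ) (hq : 1 ≤ q) :
    (X ^ q - 1 : Polynomial (ZMod p)).reverse = 1 - X ^ q := by
  haveI := Fact.mk hp
  have hdeg : (X ^ q - 1 : Polynomial (ZMod p)).natDegree = q := by
    simpa using natDegree_X_pow_sub_C (n := q) (r := (1 : ZMod p))
  have h1 : (X ^ q - 1 : Polynomial (ZMod p)) = X ^ q + C (-1) := by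
    simp [sub_eq_add_neg]
  rw [reverse, hdeg, h1, reflect_add, reflect_monomial, reflect_C,
    revAt_le (le_refl q), Nat.sub_self]
  simp [sub_eq_add_neg]

lemma rev_natDegree_eq {p : ℕ} (f : Polynomial (ZMod p)) (h0 : f.coeff 0 ≠ 0) :
    f.reverse.natDegree = f.natDegree := by
  rw [reverse_natDegree, natTrailingDegree_eq_zero_of_constantCoeff_ne_zero h0, Nat.sub_zero]

lemma rev_coeff_top {p : ℕ} (f : Polynomial (ZMod p)) (hd : 1 ≤ f.natDegree) :
    f.reverse.coeff (f.natDegree - 1) = f.coeff 1 := by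
  rw [coeff_reverse, revAt_le (Nat.sub_le _ _), Nat.sub_sub_self hd]

lemma rev_coeff_one {p : ℕ} (f : Polynomial (ZMod p)) (hd : 1 ≤ f.natDegree) :
    f.reverse.coeff 1 = f.coeff (f.natDegree - 1) := by
  rw [coeff_reverse, revAt_le hd]

/-- `X^q - 1` factors nontrivially in `𝔽_p[X;M]` iff it factors as a
product of two traceless polynomials in `𝔽_p[X]`. -/
theorem stmt5 (p q : ℕ) (hp : p.Prime) (hq : q.Prime) :
    (∃ g h : MRing p, ¬ IsUnit g ∧ ¬ IsUnit h ∧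
        (X ^ q - 1 : Polynomial (ZMod p)) = (g : Polynomial (ZMod p)) * h) ↔
      (∃ g h : Polynomial (ZMod p), Traceless g ∧ Traceless h ∧
        (X ^ q - 1 : Polynomial (ZMod p)) = g * h) := by
  haveI := Fact.mk hp
  have hq1 : 1 ≤ q := hq.pos
  have hrev := rev_XqSub p hp q hq1
  have hc0 : (X ^ q - 1 : Polynomial (ZMod p)).coeff 0 = -1 := by
    simp [coeff_X_pow, hq.pos.ne]
  constructor
  · rintro ⟨g, h, hg, hh, heq⟩
    set G := (g : Polynomial (ZMod p)) with hGdef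
    set H := (h : Polynomial (ZMod p)) with hHdef
    have hG1 : G.coeff 1 = 0 := g.2
    have hH1 : H.coeff 1 = 0 := h.2
    have hprod0 : G.coeff 0 * H.coeff 0 = -1 := by
      rw [← mul_coeff_zero, ← heq, hc0]
    have hG0 : G.coeff 0 ≠ 0 := by
      intro e; rw [e, zero_mul] at hprod0; exact neg_ne_zero.mpr one_ne_zero hprod0.symm
    have hH0 : H.coeff 0 ≠ 0 := by
      intro e; rw [e, mul_zero] at hprod0; exact neg_ne_zero.mpr one_ne_zero hprod0.symm
    have key : ∀ x : MRing p, ¬ IsUnit x → (x : Polynomial (ZMod p)).coeff 0 ≠ 0 →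
        1 ≤ (x : Polynomial (ZMod p)).natDegree := by
      intro x hx hx0
      by_contra hd
      push_neg at hd
      have hxe : (x : Polynomial (ZMod p)) = C ((x : Polynomial (ZMod p)).coeff 0) :=
        eq_C_of_natDegree_eq_zero (Nat.lt_one_iff.mp hd)
      apply hx
      refine IsUnit.of_mul_eq_one (a := x) ⟨C ((x : Polynomial (ZMod p)).coeff 0)⁻¹, ?_⟩ ?_
      · show (C ((x : Polynomial (ZMod p)).coeff 0)⁻¹).coeff 1 = 0
        simp [coeff_C]
      · apply Subtype.ext
        show (x : Polynomial (ZMod p)) * C ((x : Polynomial (ZMod p)).coeff 0)⁻¹ = 1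
        rw [hxe, ← C_mul]
        simp [mul_inv_cancel₀ hx0]
    have hGd : 1 ≤ G.natDegree := key g hg hG0
    have hHd : 1 ≤ H.natDegree := key h hh hH0
    refine ⟨-G.reverse, H.reverse, ?_, ?_, ?_⟩
    · constructor
      · rw [natDegree_neg, rev_natDegree_eq G hG0]; exact hGd
      · rw [natDegree_neg, rev_natDegree_eq G hG0, coeff_neg, rev_coeff_top G hGd, hG1, neg_zero]
    · constructor
      · rw [rev_natDegree_eq H hH0]; exact hHd
      · rw [rev_natDegree_eq H hH0, rev_coeff_top H hHd, hH1]
    · rw [neg_mul, ← reverse_mul_of_domain, ← heq, hrev, neg_sub]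
  · rintro ⟨g, h, ⟨hgd, hgt⟩, ⟨hhd, hht⟩, heq⟩
    have hprod0 : g.coeff 0 * h.coeff 0 = -1 := by
      rw [← mul_coeff_zero, ← heq, hc0]
    have hg0 : g.coeff 0 ≠ 0 := by
      intro e; rw [e, zero_mul] at hprod0; exact neg_ne_zero.mpr one_ne_zero hprod0.symm
    have hh0 : h.coeff 0 ≠ 0 := by
      intro e; rw [e, mul_zero] at hprod0; exact neg_ne_zero.mpr one_ne_zero hprod0.symm
    have hGmem : (-g.reverse) ∈ MRing p := by
      show (-g.reverse).coeff 1 = 0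
      rw [coeff_neg, rev_coeff_one g hgd, hgt, neg_zero]
    have hHmem : h.reverse ∈ MRing p := by
      show h.reverse.coeff 1 = 0
      rw [rev_coeff_one h hhd, hht]
    have key : ∀ x : MRing p, 1 ≤ (x : Polynomial (ZMod p)).natDegree → ¬ IsUnit x := by
      intro x hx hux
      have : IsUnit (x : Polynomial (ZMod p)) := hux.map (MRing p).subtype
      have := natDegree_eq_zero_of_isUnit this
      omega
    refine ⟨⟨-g.reverse, hGmem⟩, ⟨h.reverse, hHmem⟩, key _ ?_, key _ ?_, ?_⟩
    · show 1 ≤ (-g.reverse).natDegree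
      rw [natDegree_neg, rev_natDegree_eq g hg0]; exact hgd
    · show 1 ≤ h.reverse.natDegree
      rw [rev_natDegree_eq h hh0]; exact hhd
    · show (X ^ q - 1 : Polynomial (ZMod p)) = (-g.reverse) * h.reverse
      rw [neg_mul, ← reverse_mul_of_domain, ← heq, hrev, neg_sub]
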